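/- Let A be an n×n matrix over a totally ordered commutative group that possesses at least one transversal set of n column-maxima. Then the reflexive transitive closure of the path relation on rows does not depend on the choice of this transversal set of maxima. -/

import Mathlib

private lemma path_aux {n : ℕ} {M : Type*}
    [AddCommGroup M] [LinearOrder M] [IsOrderedAddMonoid M] (A : Fin n → Fin n → M)
    (σ τ : Equiv.Perm (Fin n))
    (hσ : ∀ i i', A i' (σ i) ≤ A i (σ i))
    (hτ : ∀ i i', A i' (τ i) ≤ A i (τ i)) :
    ∀ i j, A j (σ i) = A i (σ i) →
      Relation.ReflTransGen (fun i j => A j (τ i) = A i (τ i)) i j := by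
  intro i j hij
  set f : Equiv.Perm (Fin n) := σ.trans τ.symm with hf
  have hτf : ∀ x, τ (f x) = σ x := fun x => by simp [hf]
  -- each row x ties with row (f x) at column σ x = τ (f x)
  have hstep : ∀ x, A x (τ (f x)) = A (f x) (τ (f x)) := by
    intro x
    rw [hτf]
    exact le_antisymm ((hτf x) ▸ hτ (f x) x) (hσ x (f x))
  -- chain from f^(m+1) x to f x
  have hchain : ∀ (m : ℕ) (x : Fin n),
      Relation.ReflTransGen (fun i j => A j (τ i) = A i (τ i)) ((f ^ (m + 1)) x) (f x) := by
    intro m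
    induction m with
    | zero => intro x; rw [pow_one]
    | succ m ih =>
      intro x
      have h1 : (f ^ (m + 2)) x = f ((f ^ (m + 1)) x) := by
        rw [pow_succ' f (m + 1)]; rfl
      rw [h1]
      exact Relation.ReflTransGen.head (hstep ((f ^ (m + 1)) x)) (ih x)
  have hm : 0 < orderOf f := orderOf_pos f
  obtain ⟨m, hm'⟩ : ∃ m, orderOf f = m + 1 := ⟨orderOf f - 1, (Nat.succ_pred_eq_of_pos hm).symm⟩
  have hfi : (f ^ (m + 1)) i = i := by rw [← hm', pow_orderOf_eq_one]; rfl
  have h1 : Relation.ReflTransGen (fun i j => A j (τ i) = A i (τ i)) i (f i) := by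
    have := hchain m i
    rwa [hfi] at this
  refine h1.tail ?_
  -- Rτ (f i) j : A j (τ (f i)) = A (f i) (τ (f i))
  show A j (τ (f i)) = A (f i) (τ (f i))
  rw [hτf, hij]
  exact le_antisymm ((hτf i) ▸ hτ (f i) i) (hσ i (f i))

/-- Let `A` be an `n × n` matrix over a totally ordered commutative group, and
let `σ`, `τ` be two transversal sets of `n` column-maxima of `A` (i.e. each
`A i (σ i)` is maximal in its column).  Then the reflexive transitive closures
of the two induced elementary path relations on rows coincide; the elementary
path relation for `σ` relates row `i` to row `j` iff the starred maximum
`A i (σ i)` equals the entry `A j (σ i)` of row `j` in the same column. -/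
theorem path_relation_independent {n : ℕ} {M : Type*}
    [AddCommGroup M] [LinearOrder M] [IsOrderedAddMonoid M] (A : Fin n → Fin n → M)
    (σ τ : Equiv.Perm (Fin n))
    (hσ : ∀ i i', A i' (σ i) ≤ A i (σ i))
    (hτ : ∀ i i', A i' (τ i) ≤ A i (τ i)) :
    Relation.ReflTransGen (fun i j => A j (σ i) = A i (σ i)) =
      Relation.ReflTransGen (fun i j => A j (τ i) = A i (τ i)) := by
  ext i j
  constructor
  · intro h
    induction h with
    | refl => exact Relation.ReflTransGen.refl
    | tail _ hbc ih => exact ih.trans (path_aux A σ τ hσ hτ _ _ hbc)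
  · intro h
    induction h with
    | refl => exact Relation.ReflTransGen.refl
    | tail _ hbc ih => exact ih.trans (path_aux A τ σ hτ hσ _ _ hbc)
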